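/- If c ∈ S is a constant map (there is x₀ ∈ X with x·c = x₀ for all x ∈ X) and ĉ : 𝒞 → 𝒞 is a lift of c consistent with chain structure, then ĉ is a constant map on maximal chains: ĉ(C) = ĉ(C') for all maximal chains C, C' ∈ 𝒞. -/
import Mathlib


namespace Holonomy

variable {X : Type*}

/-- The extended image set `I = {X·s : s ∈ S} ∪ {X} ∪ {{x} : x ∈ X}`,
with the state set taken to be `Set.univ`. -/
def extImgs (S : Set (X → X)) : Set (Set X) :=
  {P : Set X | ∃ s ∈ S, P = s '' (Set.univ : Set X)} ∪ {(Set.univ : Set X)} ∪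
    {P : Set X | ∃ x : X, P = {x}}

/-- `C` is a maximal chain (w.r.t. inclusion) inside the family `I`. -/
def IsMaxChainIn (I : Set (Set X)) (C : Set (Set X)) : Prop :=
  C ⊆ I ∧ IsChain (· ⊆ ·) C ∧
    ∀ D : Set (Set X), D ⊆ I → IsChain (· ⊆ ·) D → C ⊆ D → D = C

/-- `𝒞`, the maximal chains in the extended image set. -/
def MaxChain (S : Set (X → X)) : Type _ :=
  {C : Set (Set X) // IsMaxChainIn (extImgs S) C}

/-- The action of `s` on a chain, `C·s = {P·s : P ∈ C}`. -/
def chainAct (C : Set (Set X)) (s : X → X) : Set (Set X) :=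
  (fun P => s '' P) '' C

/-- Chains `C` and `D` agree down to `P`. -/
def AgreeDownTo (C D : Set (Set X)) (P : Set X) : Prop :=
  P ∈ C ∧ P ∈ D ∧ ∀ Q : Set X, P ⊆ Q → (Q ∈ C ↔ Q ∈ D)

/-- `sh : 𝒞 → 𝒞` is a lift of `s`: `C·s ⊆ sh C` for every maximal chain `C`. -/
def IsLift (S : Set (X → X)) (s : X → X) (sh : MaxChain S → MaxChain S) : Prop :=
  ∀ C : MaxChain S, chainAct C.val s ⊆ (sh C).val

/-- `sh` is consistent with chain structure. -/
def Consistent (S : Set (X → X)) (s : X → X) (sh : MaxChain S → MaxChain S) : Prop :=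
  ∀ (C C' : MaxChain S) (P : Set X),
    AgreeDownTo C.val C'.val P → AgreeDownTo (sh C).val (sh C').val (s '' P)

/-- Product of a list of transformations, in left-to-right (right-action) order:
`prodList [a₁,…,a_k] = a₁⋯a_k`, i.e. `x ↦ a_k (⋯ (a₁ x))`. -/
def prodList {α : Type*} (l : List (α → α)) : α → α :=
  fun x => l.foldl (fun y f => f y) x

/-- Subduction: `P ⊆_S Q` iff `P ⊆ Q·s` for some `s ∈ S¹ = S ∪ {id}`. -/
def Subduction (S : Set (X → X)) (P Q : Set X) : Prop :=
  ∃ s ∈ insert (id : X → X) S, P ⊆ s '' Q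

/-- `P ≡_S Q`. -/
def SubEquiv (S : Set (X → X)) (P Q : Set X) : Prop :=
  Subduction S P Q ∧ Subduction S Q P

/-- Strict subduction `P ⊂_S Q`. -/
def SSubduction (S : Set (X → X)) (P Q : Set X) : Prop :=
  Subduction S P Q ∧ ¬ Subduction S Q P

/-- `P` is not a singleton. -/
def nonSingleton (P : Set X) : Prop := ¬ ∃ x : X, P = {x}

/-- The height of `Q`: the largest length of a strict subduction chain of
non-singleton members of `I` ending at `Q` (`0` for singletons, since then no
such chain exists). -/
noncomputable def height (S : Set (X → X)) (Q : Set X) : ℕ :=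
  sSup {n : ℕ | ∃ l : List (Set X), l.length = n ∧
    (∀ R ∈ l, R ∈ extImgs S ∧ nonSingleton R) ∧
    l.Chain' (SSubduction S) ∧ l.getLast? = some Q}

/-- Depth: `d(Q) = h(X) - h(Q) + 1`. -/
noncomputable def depth (S : Set (X → X)) (Q : Set X) : ℕ :=
  height S (Set.univ : Set X) - height S Q + 1

/-- The tiles of `P`: maximal elements (w.r.t. inclusion) of `{Q ∈ I : Q ⊊ P}`. -/
def tiles (S : Set (X → X)) (P : Set X) : Set (Set X) :=
  {Q | (Q ∈ extImgs S ∧ Q ⊂ P) ∧ ∀ R : Set X, R ∈ extImgs S → R ⊂ P → Q ⊆ R → Q = R}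

/-- The permutator group `G_P` of `P`, as a set of permutations of `P`. -/
def permutator (S : Set (X → X)) (P : Set X) : Set (Equiv.Perm ↥P) :=
  {σ | ∃ s ∈ S, s '' P = P ∧ ∀ p : ↥P, (σ p : X) = s (p : X)}

/-- The holonomy group `H_P` of `P`, as a set of permutations of `tiles P`. -/
def holonomyGroup (S : Set (X → X)) (P : Set X) : Set (Equiv.Perm ↥(tiles S P)) :=
  {σ | ∃ s ∈ S, s '' P = P ∧ ∀ T : ↥(tiles S P), ((σ T : Set X) : Set X) = s '' ((T : Set X) : Set X)}



/-- The state of approximation at level `i` of the positioned chain of a maximal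
chain `C`: `α_1 = X`, and for `i > 1`, `α_i` is the entry of the positioned chain
at the largest filled position `j < i`.  Since position `d(P)` of the positioned
chain of `C : X = P₁ ⊋ ⋯ ⊋ P_k` holds the successor of `P` for each non-minimal
member `P`, `α_i` is the smallest member of `C` whose immediate predecessor in
`C` has depth `< i`. -/
noncomputable def alpha (S : Set (X → X)) (C : Set (Set X)) (i : ℕ) : Set X :=
  if i ≤ 1 then Set.univ
  else ⋂₀ {Q | Q ∈ C ∧ ∀ P : Set X,
    (P ∈ C ∧ Q ⊂ P ∧ ∀ R ∈ C, Q ⊂ R → P ⊆ R) → depth S P < i}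

/-- The chosen equivalence-class representatives of depth `i`. -/
def RepsAt (S : Set (X → X)) (rep : Set X → Set X) (i : ℕ) : Set (Set X) :=
  {R | R ∈ extImgs S ∧ nonSingleton R ∧ rep R = R ∧ depth S R = i}

/-- States of the `i`-th holonomy component `ℋ_i`:
`none` is the extra state `*`, and `some (R, T)` is the tile `T` in the copy of
`tiles(R)` in the disjoint union, for `R` a representative of depth `i`. -/
def ValidAt (S : Set (X → X)) (rep : Set X → Set X) (i : ℕ)
    (t : Option (Set X × Set X)) : Prop :=
  t = none ∨ ∃ R T : Set X, t = some (R, T) ∧ R ∈ RepsAt S rep i ∧ T ∈ tiles S R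

/-- Transformations of the `i`-th holonomy component `ℋ_i` (on its state set):
either a constant map to a state of `ℋ_i`, or an element `(h₁,…,h_k)` of
`H_{R₁} × ⋯ × H_{R_k}` acting on the copy of `tiles(R_j)` by `h_j` (that is, by
`T ↦ T·s` for some `s` stabilizing `R_j`) and fixing `*`. -/
def IsHolTrans (S : Set (X → X)) (rep : Set X → Set X) (i : ℕ)
    (φ : Option (Set X × Set X) → Option (Set X × Set X)) : Prop :=
  (∃ t₀, ValidAt S rep i t₀ ∧ ∀ t, ValidAt S rep i t → φ t = t₀) ∨
  (φ none = none ∧ ∀ R ∈ RepsAt S rep i, ∃ s ∈ S, s '' R = R ∧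
    ∀ T ∈ tiles S R, φ (some (R, T)) = some (R, s '' T))

/-- `F` is an element of the wreath product `ℋ₁ ≀ ⋯ ≀ ℋ_d` of the holonomy
components: the action on each coordinate `i` depends only on the coordinates
above it (through a dependency function), and on every valid state this
component action is a transformation of `ℋ_i`. -/
def IsCascade (S : Set (X → X)) (rep : Set X → Set X) (d : ℕ)
    (F : (Fin d → Option (Set X × Set X)) → (Fin d → Option (Set X × Set X))) : Prop :=
  ∀ i : Fin d, ∃ g : (Fin d → Option (Set X × Set X)) →
      (Option (Set X × Set X) → Option (Set X × Set X)),
    (∀ t, F t i = g t (t i)) ∧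
    (∀ t t', (∀ j : Fin d, j < i → t j = t' j) → g t = g t') ∧
    (∀ t, (∀ j : Fin d, ValidAt S rep (j.val + 1) (t j)) →
      IsHolTrans S rep (i.val + 1) (g t))



lemma nonempty_of_mem_extImgs {X : Type*} [Nonempty X] {S : Set (X → X)}
    {Q : Set X} (hQ : Q ∈ extImgs S) : Q.Nonempty := by
  rcases hQ with (⟨s, _, rfl⟩ | h) | ⟨x, rfl⟩
  · exact (Set.univ_nonempty).image s
  · simp only [Set.mem_singleton_iff] at h; subst h; exact Set.univ_nonempty
  · exact Set.singleton_nonempty x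

lemma univ_mem_maxChain {X : Type*} {S : Set (X → X)} (C : MaxChain S) :
    (Set.univ : Set X) ∈ C.val := by
  obtain ⟨hsub, hchain, hmax⟩ := C.2
  have huI : (Set.univ : Set X) ∈ extImgs S := by
    left; right; rfl
  have hins : insert (Set.univ : Set X) C.val = C.val := by
    apply hmax
    · intro P hP
      rcases hP with rfl | hP
      · exact huI
      · exact hsub hP
    · exact hchain.insert (fun b _ _ => Or.inr (Set.subset_univ b))
    · exact Set.subset_insert _ _
  rw [← hins]; exact Set.mem_insert _ _

lemma singleton_subset_of_mem {X : Type*} [Nonempty X] {S : Set (X → X)}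
    (C : MaxChain S) {x₀ : X} (hx : {x₀} ∈ C.val) {Q : Set X} (hQ : Q ∈ C.val) :
    ({x₀} : Set X) ⊆ Q := by
  obtain ⟨hsub, hchain, _⟩ := C.2
  by_cases heq : Q = {x₀}
  · subst heq; exact subset_rfl
  · rcases hchain hx hQ (fun h => heq h.symm) with h | h
    · exact h
    · have hne : Q.Nonempty := nonempty_of_mem_extImgs (hsub hQ)
      rcases Set.subset_singleton_iff_eq.mp h with h' | h'
      · exact absurd h' (Set.nonempty_iff_ne_empty.mp hne)
      · exact absurd h' heq

/-- a consistent lift of a constant map is a constant map on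
maximal chains. -/
theorem lift_of_constant_is_constant {X : Type*} [Fintype X] [Nonempty X]
    (S : Set (X → X)) (hS : ∀ s ∈ S, ∀ t ∈ S, (fun x => t (s x)) ∈ S)
    (c : X → X) (hc : c ∈ S) (x₀ : X) (hconst : ∀ x : X, c x = x₀)
    (ch : MaxChain S → MaxChain S)
    (hlift : IsLift S c ch) (hcons : Consistent S c ch) :
    ∀ C C' : MaxChain S, ch C = ch C' := by
  intro C C'
  have himg : c '' (Set.univ : Set X) = {x₀} := by
    ext y; simp [hconst, eq_comm]
  have hA : AgreeDownTo C.val C'.val (Set.univ : Set X) := by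
    refine ⟨univ_mem_maxChain C, univ_mem_maxChain C', fun Q hQ => ?_⟩
    have : Q = Set.univ := Set.eq_univ_of_univ_subset hQ
    subst this
    simp [univ_mem_maxChain C, univ_mem_maxChain C']
  have hA' := hcons C C' _ hA
  rw [himg] at hA'
  obtain ⟨h1, h2, h3⟩ := hA'
  apply Subtype.ext
  ext Q
  constructor
  · intro hQ
    exact (h3 Q (singleton_subset_of_mem (ch C) h1 hQ)).mp hQ
  · intro hQ
    exact (h3 Q (singleton_subset_of_mem (ch C') h2 hQ)).mpr hQ

end Holonomy
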